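/- Let n ≥ 1, δ ∈ (0,1), B ≥ 5/δ an integer, x real with ⌊(1+δ)x⌋ = B, and y = ⌊((1−δ)x+2)/(1+δ)⌋. Then for any ε with 0 < ε ≤ 1: (1/n + ε)·⌊(1+δ)x⌋ + (1 − 1/n − ε)·⌈(1−δ)y⌉ ≤ (1/n + ((n−1)/n)·((1−δ)/(1+δ))² + ε + 4/B)·⌊(1+δ)x⌋. -/

import Mathlib

set_option maxHeartbeats 1000000


theorem stmt14 (n : ℕ) (hn : 1 ≤ n) (δ : ℝ) (hδ : δ ∈ Set.Ioo (0:ℝ) 1)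
    (B : ℤ) (hB : (B : ℝ) ≥ 5 / δ)
    (x : ℝ) (hx : ⌊(1 + δ) * x⌋ = B)
    (ε : ℝ) (hε : 0 < ε) (hε1 : ε ≤ 1) :
    let y : ℤ := ⌊((1 - δ) * x + 2) / (1 + δ)⌋
    (1 / (n : ℝ) + ε) * ((⌊(1 + δ) * x⌋ : ℤ) : ℝ)
      + (1 - 1 / (n : ℝ) - ε) * ((⌈(1 - δ) * (y : ℝ)⌉ : ℤ) : ℝ)
    ≤ (1 / (n : ℝ) + (((n : ℝ) - 1) / (n : ℝ)) * ((1 - δ) / (1 + δ)) ^ 2 + ε + 4 / (B : ℝ))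
        * ((⌊(1 + δ) * x⌋ : ℤ) : ℝ) := by
  intro y
  obtain ⟨hδ0, hδ1⟩ := hδ
  have hD : (0:ℝ) < 1 + δ := by linarith
  have hq : (0:ℝ) < (1+δ)^2 := by positivity
  have hB5 : (5:ℝ) < (B:ℝ) := by
    have : (5:ℝ) < 5 / δ := by
      rw [lt_div_iff₀ hδ0]; nlinarith
    linarith
  have hBpos : (0:ℝ) < (B:ℝ) := by linarith
  have h1 : (B:ℝ) ≤ (1+δ) * x := by rw [← hx]; exact Int.floor_le _
  have h2 : (1+δ) * x < (B:ℝ) + 1 := by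
    rw [← hx]; exact Int.lt_floor_add_one _
  have hxpos : 0 < x := by nlinarith
  have h3 : (y:ℝ) ≤ ((1-δ)*x+2)/(1+δ) := Int.floor_le _
  have h3' : (y:ℝ) * (1+δ) ≤ (1-δ)*x + 2 := by
    rw [← le_div_iff₀ hD]; exact h3
  have h5 : ((⌈(1-δ)*(y:ℝ)⌉ : ℤ) : ℝ) < (1-δ)*(y:ℝ) + 1 := Int.ceil_lt_add_one _
  have hy0 : (0:ℝ) ≤ (y:ℝ) := by
    have : (0:ℤ) ≤ y := by
      apply Int.le_floor.mpr
      push_cast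
      exact div_nonneg (by nlinarith) hD.le
    exact_mod_cast this
  clear_value y
  have h6 : (0:ℝ) ≤ ((⌈(1-δ)*(y:ℝ)⌉ : ℤ) : ℝ) :=
    le_trans (by nlinarith) (Int.le_ceil _)
  set C : ℝ := ((⌈(1-δ)*(y:ℝ)⌉ : ℤ) : ℝ) with hCdef
  have hkey : C * (1+δ)^2 ≤ (1-δ)^2 * (B:ℝ) + 4 * (1+δ)^2 := by
    nlinarith [mul_lt_mul_of_pos_right h5 hq,
      mul_le_mul_of_nonneg_left h3' (by nlinarith : (0:ℝ) ≤ (1-δ)*(1+δ)),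
      mul_le_mul_of_nonneg_left h2.le (by nlinarith : (0:ℝ) ≤ (1-δ)^2)]
  have hnpos : (0:ℝ) < (n:ℝ) := by exact_mod_cast hn
  set t : ℝ := 1 / (n:ℝ) with htdef
  have ht0 : 0 < t := by positivity
  have ht1 : t ≤ 1 := by
    rw [htdef, div_le_one hnpos]; exact_mod_cast hn
  have hfrac : ((n:ℝ) - 1) / (n:ℝ) = 1 - t := by
    rw [htdef]; field_simp
  rw [hx, hfrac]
  have key2 : (1 - t - ε) * C * (1+δ)^2 ≤ (1-t) * (1-δ)^2 * (B:ℝ) + 4 * (1+δ)^2 := by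
    rcases le_or_gt 0 (1 - t - ε) with hc | hc
    · have hm : (1-t-ε) * (C*(1+δ)^2) ≤ (1-t-ε) * ((1-δ)^2*(B:ℝ) + 4*(1+δ)^2) :=
        mul_le_mul_of_nonneg_left hkey hc
      have hp1 : 0 ≤ ε * ((1-δ)^2 * (B:ℝ)) :=
        mul_nonneg hε.le (mul_nonneg (sq_nonneg _) hBpos.le)
      have hp2 : 0 ≤ (t+ε) * (4*(1+δ)^2) :=
        mul_nonneg (by linarith) (by positivity)
      nlinarith [hm, hp1, hp2]
    · have hm : (1-t-ε) * (C*(1+δ)^2) ≤ 0 :=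
        mul_nonpos_of_nonpos_of_nonneg hc.le (mul_nonneg h6 hq.le)
      have hp : 0 ≤ (1-t)*((1-δ)^2*(B:ℝ)) :=
        mul_nonneg (by linarith) (mul_nonneg (sq_nonneg _) hBpos.le)
      nlinarith [hm, hp, hq]
  have expand : ((1-t) * ((1-δ)/(1+δ))^2 * (B:ℝ) + 4) * (1+δ)^2
      = (1-t) * (1-δ)^2 * (B:ℝ) + 4 * (1+δ)^2 := by
    have hc2 : ((1-δ)/(1+δ))^2 * (1+δ)^2 = (1-δ)^2 := by
      rw [div_pow]; exact div_mul_cancel₀ _ hq.ne'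
    calc ((1-t) * ((1-δ)/(1+δ))^2 * (B:ℝ) + 4) * (1+δ)^2
        = (1-t) * (B:ℝ) * (((1-δ)/(1+δ))^2 * (1+δ)^2) + 4 * (1+δ)^2 := by ring
      _ = (1-t) * (1-δ)^2 * (B:ℝ) + 4 * (1+δ)^2 := by rw [hc2]; ring
  have key3 : (1 - t - ε) * C ≤ (1-t) * ((1-δ)/(1+δ))^2 * (B:ℝ) + 4 := by
    rw [← mul_le_mul_iff_of_pos_right hq, expand]
    exact key2
  have e1 : (4 / (B:ℝ)) * (B:ℝ) = 4 := div_mul_cancel₀ 4 hBpos.ne'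
  nlinarith [key3, e1]
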